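/- Let U ⊆ ℂⁿ be open, let r : U → ℝ be of class C² with L_r(z;X) > 0 for every z ∈ U and every nonzero X ∈ ℂⁿ, and let K ⊆ U be compact. Then there exist constants C > 0 and λ > 0 such that for every ζ ∈ K with r(ζ) = 0 and every z ∈ U with r(z) ≤ 0 and ‖z−ζ‖ < λ, one has Re P_r(z;ζ) ≥ (C/2)‖z−ζ‖². -/

import Mathlib

open Complex Metric Set Function

noncomputable section

/-- Directional Wirtinger derivative `∂_v f(z) = (1/2)(Df(z)v − i·Df(z)(i·v))`.
For `v = e_j` this is the Wirtinger derivative `∂f/∂z_j(z)`; in coordinates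
`∂_v = Σ_j v_j ∂/∂z_j`. -/
def wDeriv {F : Type*} [NormedAddCommGroup F] [NormedSpace ℂ F]
    (f : F → ℂ) (v : F) (z : F) : ℂ :=
  (1 / 2) * (fderiv ℝ f z v - Complex.I * fderiv ℝ f z (Complex.I • v))

/-- Directional conjugate Wirtinger derivative `∂̄_v f(z) = (1/2)(Df(z)v + i·Df(z)(i·v))`;
in coordinates `∂̄_v = Σ_k (conj v_k) ∂/∂z̄_k`. -/
def wDerivBar {F : Type*} [NormedAddCommGroup F] [NormedSpace ℂ F]
    (f : F → ℂ) (v : F) (z : F) : ℂ :=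
  (1 / 2) * (fderiv ℝ f z v + Complex.I * fderiv ℝ f z (Complex.I • v))

/-- The Levi form `L_r(z;X) = Σ_{j,k} ∂²r/∂z_j∂z̄_k(z) X_j (conj X_k)` of a real-valued
function, written via directional Wirtinger derivatives. -/
def leviForm {F : Type*} [NormedAddCommGroup F] [NormedSpace ℂ F]
    (r : F → ℝ) (z X : F) : ℂ :=
  wDerivBar (fun w => wDeriv (fun y => (r y : ℂ)) X w) X z

/-- The Levi polynomial
`P_r(z;ζ) = −Σ_j ∂r/∂z_j(ζ)(z_j−ζ_j) − (1/2) Σ_{i,j} ∂²r/∂z_i∂z_j(ζ)(z_i−ζ_i)(z_j−ζ_j)`. -/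
def leviPolynomial {F : Type*} [NormedAddCommGroup F] [NormedSpace ℂ F]
    (r : F → ℝ) (ζ z : F) : ℂ :=
  - wDeriv (fun y => (r y : ℂ)) (z - ζ) ζ
  - (1 / 2) * wDeriv (fun w => wDeriv (fun y => (r y : ℂ)) (z - ζ) w) (z - ζ) ζ


variable {F : Type*} [NormedAddCommGroup F] [NormedSpace ℂ F]

lemma fderiv_ofReal_comp (r : F → ℝ) {z : F} (h : DifferentiableAt ℝ r z) :
    fderiv ℝ (fun y => (r y : ℂ)) z = Complex.ofRealCLM.comp (fderiv ℝ r z) :=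
  (Complex.ofRealCLM.hasFDerivAt.comp z h.hasFDerivAt).fderiv

lemma wDeriv_ofReal_eq (r : F → ℝ) {z : F} (h : DifferentiableAt ℝ r z) (X : F) :
    wDeriv (fun y => (r y : ℂ)) X z
      = (1/2 : ℂ) * ((fderiv ℝ r z X : ℂ)
          - Complex.I * (fderiv ℝ r z (Complex.I • X) : ℂ)) := by
  simp [wDeriv, fderiv_ofReal_comp r h]

/-- derivative of `w ↦ wDeriv (r·:ℂ) X w` -/
lemma hasFDerivAt_wDeriv (r : F → ℝ) {U : Set F} (hU : IsOpen U)
    (hdiff : ∀ w ∈ U, DifferentiableAt ℝ r w) {ζ : F} (hζ : ζ ∈ U)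
    {M : F →L[ℝ] F →L[ℝ] ℝ} (hM : HasFDerivAt (fun w => fderiv ℝ r w) M ζ) (X : F) :
    HasFDerivAt (fun w => wDeriv (fun y => (r y : ℂ)) X w)
      ((1/2 : ℂ) • (Complex.ofRealCLM.comp (M.flip X)
        - Complex.I • Complex.ofRealCLM.comp (M.flip (Complex.I • X)))) ζ := by
  have h2 : HasFDerivAt (fun w => fderiv ℝ r w X) (M.flip X) ζ := by
    simpa using hM.clm_apply (hasFDerivAt_const X ζ)
  have h2' : HasFDerivAt (fun w => fderiv ℝ r w (Complex.I • X)) (M.flip (Complex.I • X)) ζ := by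
    simpa using hM.clm_apply (hasFDerivAt_const (Complex.I • X) ζ)
  have h3 : HasFDerivAt (fun w => ((fderiv ℝ r w X : ℝ) : ℂ))
      (Complex.ofRealCLM.comp (M.flip X)) ζ := Complex.ofRealCLM.hasFDerivAt.comp ζ h2
  have h4 : HasFDerivAt (fun w => ((fderiv ℝ r w (Complex.I • X) : ℝ) : ℂ))
      (Complex.ofRealCLM.comp (M.flip (Complex.I • X))) ζ :=
    Complex.ofRealCLM.hasFDerivAt.comp ζ h2'
  have h5 := (h3.sub (h4.const_mul Complex.I)).const_mul (1/2 : ℂ)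
  refine h5.congr_of_eventuallyEq ?_
  filter_upwards [hU.mem_nhds hζ] with w hw
  rw [wDeriv_ofReal_eq r (hdiff w hw) X]
  rfl

lemma fderiv_wDeriv_apply (r : F → ℝ) {U : Set F} (hU : IsOpen U)
    (hdiff : ∀ w ∈ U, DifferentiableAt ℝ r w) {ζ : F} (hζ : ζ ∈ U)
    {M : F →L[ℝ] F →L[ℝ] ℝ} (hM : HasFDerivAt (fun w => fderiv ℝ r w) M ζ) (X u : F) :
    fderiv ℝ (fun w => wDeriv (fun y => (r y : ℂ)) X w) ζ u
      = (1/2 : ℂ) * ((M u X : ℂ) - Complex.I * (M u (Complex.I • X) : ℂ)) := by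
  rw [(hasFDerivAt_wDeriv r hU hdiff hζ hM X).fderiv]
  simp [smul_sub]
  ring

lemma re_aux1 (a b c d : ℝ) :
    ((1/2:ℂ) * ((1/2:ℂ)*((a:ℂ) - Complex.I*(b:ℂ))
      + Complex.I*((1/2:ℂ)*((c:ℂ) - Complex.I*(d:ℂ))))).re = (1/4)*(a+d) := by
  simp; ring

lemma re_aux2 (a b c d : ℝ) :
    ((1/2:ℂ) * ((1/2:ℂ)*((a:ℂ) - Complex.I*(b:ℂ))
      - Complex.I*((1/2:ℂ)*((c:ℂ) - Complex.I*(d:ℂ))))).re = (1/4)*(a-d) := by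
  simp; ring

lemma re_leviForm_eq (r : F → ℝ) {U : Set F} (hU : IsOpen U)
    (hdiff : ∀ w ∈ U, DifferentiableAt ℝ r w) {ζ : F} (hζ : ζ ∈ U)
    {M : F →L[ℝ] F →L[ℝ] ℝ} (hM : HasFDerivAt (fun w => fderiv ℝ r w) M ζ) (X : F) :
    (leviForm r ζ X).re
      = (1/4) * (M X X + M (Complex.I • X) (Complex.I • X)) := by
  have e1 := fderiv_wDeriv_apply r hU hdiff hζ hM X X
  have e2 := fderiv_wDeriv_apply r hU hdiff hζ hM X (Complex.I • X)
  rw [leviForm, wDerivBar, e1, e2]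
  exact re_aux1 _ _ _ _

lemma re_leviPolynomial_eq (r : F → ℝ) {U : Set F} (hU : IsOpen U)
    (hdiff : ∀ w ∈ U, DifferentiableAt ℝ r w) {ζ : F} (hζ : ζ ∈ U)
    {M : F →L[ℝ] F →L[ℝ] ℝ} (hM : HasFDerivAt (fun w => fderiv ℝ r w) M ζ) (z : F) :
    (leviPolynomial r ζ z).re
      = -(1/2) * (fderiv ℝ r ζ (z - ζ))
        - (1/8) * (M (z-ζ) (z-ζ) - M (Complex.I • (z-ζ)) (Complex.I • (z-ζ))) := by
  have e1 := fderiv_wDeriv_apply r hU hdiff hζ hM (z-ζ) (z-ζ)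
  have e2 := fderiv_wDeriv_apply r hU hdiff hζ hM (z-ζ) (Complex.I • (z-ζ))
  have e0 := wDeriv_ofReal_eq r (hdiff ζ hζ) (z-ζ)
  rw [leviPolynomial, e0]
  rw [show wDeriv (fun w => wDeriv (fun y => (r y:ℂ)) (z-ζ) w) (z-ζ) ζ
      = (1/2:ℂ) * (fderiv ℝ (fun w => wDeriv (fun y => (r y:ℂ)) (z-ζ) w) ζ (z-ζ)
        - Complex.I * fderiv ℝ (fun w => wDeriv (fun y => (r y:ℂ)) (z-ζ) w) ζ (Complex.I • (z-ζ))) from rfl]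
  rw [e1, e2]
  have h2 := re_aux2 (M (z-ζ) (z-ζ)) (M (z-ζ) (Complex.I • (z-ζ)))
    (M (Complex.I • (z-ζ)) (z-ζ)) (M (Complex.I • (z-ζ)) (Complex.I • (z-ζ)))
  simp only [Complex.sub_re, Complex.neg_re, Complex.mul_re]
  simp at h2 ⊢
  ring_nf


lemma taylor_est (r : F → ℝ) {U : Set F} {ζ z : F} {ε : ℝ}
    (hball : closedBall ζ ‖z - ζ‖ ⊆ U)
    (hD : ∀ w ∈ U, HasFDerivAt r (fderiv ℝ r w) w)
    (hB : ∀ w ∈ U, HasFDerivAt (fderiv ℝ r) (fderiv ℝ (fderiv ℝ r) w) w)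
    (hsymm : ∀ u v, fderiv ℝ (fderiv ℝ r) ζ u v = fderiv ℝ (fderiv ℝ r) ζ v u)
    (hBnear : ∀ w ∈ closedBall ζ ‖z - ζ‖,
      ‖fderiv ℝ (fderiv ℝ r) w - fderiv ℝ (fderiv ℝ r) ζ‖ ≤ ε) :
    |r z - r ζ - fderiv ℝ r ζ (z - ζ)
      - (1/2) * fderiv ℝ (fderiv ℝ r) ζ (z - ζ) (z - ζ)| ≤ ε * ‖z - ζ‖^2 := by
  set B0 := fderiv ℝ (fderiv ℝ r) ζ with hB0
  set t := ‖z - ζ‖ with ht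
  set s := closedBall ζ t with hs
  have hζs : ζ ∈ s := mem_closedBall_self (norm_nonneg _)
  have hzs : z ∈ s := by simp [hs, mem_closedBall, dist_eq_norm, ht]
  have hε0 : 0 ≤ ε := (hBnear ζ hζs).trans' (ContinuousLinearMap.opNorm_nonneg _)
  have hc0 : ∀ w : F, HasFDerivAt (fun w => B0 (w - ζ)) B0 w := fun w => by
    exact (B0.hasFDerivAt.comp w ((hasFDerivAt_id w).sub_const ζ)).congr_fderiv
      (ContinuousLinearMap.comp_id _)
  -- step 1
  have hg₁ : ∀ w ∈ s, HasFDerivWithinAt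
      (fun w => fderiv ℝ r w - fderiv ℝ r ζ - B0 (w - ζ))
      (fderiv ℝ (fderiv ℝ r) w - B0) s w := fun w hw =>
    (((hB w (hball hw)).sub_const (fderiv ℝ r ζ)).sub (hc0 w)).hasFDerivWithinAt
  have step1 : ∀ z' ∈ s, ‖fderiv ℝ r z' - fderiv ℝ r ζ - B0 (z' - ζ)‖ ≤ ε * ‖z' - ζ‖ := by
    intro z' hz'
    have := (convex_closedBall ζ t).norm_image_sub_le_of_norm_hasFDerivWithin_le
      hg₁ (fun w hw => hBnear w hw) hζs hz'
    simpa using this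
  -- step 2
  have hεt : ∀ w ∈ s, ‖fderiv ℝ r w - fderiv ℝ r ζ - B0 (w - ζ)‖ ≤ ε * t := by
    intro w hw
    refine (step1 w hw).trans (mul_le_mul_of_nonneg_left ?_ hε0)
    simpa [hs, mem_closedBall, dist_eq_norm] using hw
  have hφ : ∀ w ∈ s, HasFDerivWithinAt
      (fun w => r w - fderiv ℝ r ζ (w - ζ) - (1/2) * B0 (w - ζ) (w - ζ))
      (fderiv ℝ r w - fderiv ℝ r ζ - B0 (w - ζ)) s w := by
    intro w hw
    have ha := hD w (hball hw)
    have hb : HasFDerivAt (fun w => fderiv ℝ r ζ (w - ζ)) (fderiv ℝ r ζ) w := by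
      exact ((fderiv ℝ r ζ).hasFDerivAt.comp w ((hasFDerivAt_id w).sub_const ζ)).congr_fderiv
        (ContinuousLinearMap.comp_id _)
    have hu : HasFDerivAt (fun w => w - ζ) (ContinuousLinearMap.id ℝ F) w :=
      (hasFDerivAt_id w).sub_const ζ
    have hq := ((hc0 w).clm_apply hu).const_mul (1/2 : ℝ)
    have hcomb := (ha.sub hb).sub hq
    refine (HasFDerivAt.congr_fderiv hcomb ?_).hasFDerivWithinAt
    ext v
    simp only [ContinuousLinearMap.sub_apply, ContinuousLinearMap.smul_apply,
      ContinuousLinearMap.add_apply, ContinuousLinearMap.comp_apply,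
      ContinuousLinearMap.coe_id', id, ContinuousLinearMap.flip_apply, smul_eq_mul]
    rw [hsymm v (w - ζ)]
    ring
  have step2 := (convex_closedBall ζ t).norm_image_sub_le_of_norm_hasFDerivWithin_le
    hφ hεt hζs hzs
  simp only [sub_self, map_zero, mul_zero, sub_zero] at step2
  have heq : r z - r ζ - fderiv ℝ r ζ (z - ζ) - (1/2) * B0 (z - ζ) (z - ζ)
      = (r z - fderiv ℝ r ζ (z - ζ) - (1/2) * B0 (z - ζ) (z - ζ)) - r ζ := by ring
  rw [heq, ← Real.norm_eq_abs]
  refine step2.trans (le_of_eq ?_)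
  rw [← ht]; ring

/-- Let `U ⊆ ℂⁿ` be open, `r : U → ℝ` of class `C²` with everywhere
positive definite Levi form, and `K ⊆ U` compact. Then there are constants `C > 0` and
`λ > 0` such that for every `ζ ∈ K` with `r ζ = 0` and every `z ∈ U` with `r z ≤ 0` and
`‖z − ζ‖ < λ` one has `Re P_r(z;ζ) ≥ (C/2) ‖z−ζ‖²`. -/
theorem statement_5 {n : ℕ} (U : Set (EuclideanSpace ℂ (Fin n))) (hU : IsOpen U)
    (r : EuclideanSpace ℂ (Fin n) → ℝ) (hr : ContDiffOn ℝ 2 r U)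
    (hLevi : ∀ z ∈ U, ∀ X : EuclideanSpace ℂ (Fin n), X ≠ 0 → 0 < (leviForm r z X).re)
    (K : Set (EuclideanSpace ℂ (Fin n))) (hK : IsCompact K) (hKU : K ⊆ U) :
    ∃ C > (0 : ℝ), ∃ lam > (0 : ℝ), ∀ ζ ∈ K, r ζ = 0 →
      ∀ z ∈ U, r z ≤ 0 → ‖z - ζ‖ < lam →
        C / 2 * ‖z - ζ‖ ^ 2 ≤ (leviPolynomial r ζ z).re := by
  classical
  have hdiff : ∀ w ∈ U, DifferentiableAt ℝ r w := fun w hw =>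
    (hr.differentiableOn two_ne_zero).differentiableAt (hU.mem_nhds hw)
  have hD : ∀ w ∈ U, HasFDerivAt r (fderiv ℝ r w) w := fun w hw => (hdiff w hw).hasFDerivAt
  have hDc : ContDiffOn ℝ 1 (fderiv ℝ r) U := hr.fderiv_of_isOpen hU (by norm_num)
  have hB : ∀ w ∈ U, HasFDerivAt (fderiv ℝ r) (fderiv ℝ (fderiv ℝ r) w) w := fun w hw =>
    ((hDc.differentiableOn one_ne_zero).differentiableAt (hU.mem_nhds hw)).hasFDerivAt
  have hBc : ContinuousOn (fun w => fderiv ℝ (fderiv ℝ r) w) U :=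
    hDc.continuousOn_fderiv_of_isOpen hU le_rfl
  have hsymm : ∀ w ∈ U, ∀ u v, fderiv ℝ (fderiv ℝ r) w u v = fderiv ℝ (fderiv ℝ r) w v u :=
    fun w hw => (hr.contDiffAt (hU.mem_nhds hw)).isSymmSndFDerivAt (by simp)
  have hq_eq : ∀ ζ ∈ U, ∀ X, (leviForm r ζ X).re
      = (1/4) * (fderiv ℝ (fderiv ℝ r) ζ X X
        + fderiv ℝ (fderiv ℝ r) ζ (Complex.I • X) (Complex.I • X)) :=
    fun ζ hζ X => re_leviForm_eq r hU hdiff hζ (hB ζ hζ) X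
  -- uniform positivity of the Levi form on K
  obtain ⟨c₀, hc₀, hmin⟩ : ∃ c₀ > (0:ℝ), ∀ ζ ∈ K, ∀ X : EuclideanSpace ℂ (Fin n), ‖X‖ = 1 →
      c₀ ≤ (1/4) * (fderiv ℝ (fderiv ℝ r) ζ X X
        + fderiv ℝ (fderiv ℝ r) ζ (Complex.I • X) (Complex.I • X)) := by
    by_cases hS : (K ×ˢ sphere (0:EuclideanSpace ℂ (Fin n)) 1).Nonempty
    · have hsub : K ×ˢ sphere (0:EuclideanSpace ℂ (Fin n)) 1 ⊆ U ×ˢ univ := by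
        intro p hp; exact ⟨hKU hp.1, trivial⟩
      have c1 : ContinuousOn
          (fun p : EuclideanSpace ℂ (Fin n) × EuclideanSpace ℂ (Fin n) =>
            fderiv ℝ (fderiv ℝ r) p.1)
          (K ×ˢ sphere (0:EuclideanSpace ℂ (Fin n)) 1) :=
        hBc.comp continuousOn_fst (fun p hp => hKU hp.1)
      have c2 : ContinuousOn
          (fun p : EuclideanSpace ℂ (Fin n) × EuclideanSpace ℂ (Fin n) => p.2)
          (K ×ˢ sphere (0:EuclideanSpace ℂ (Fin n)) 1) := continuousOn_snd
      have c3 : ContinuousOn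
          (fun p : EuclideanSpace ℂ (Fin n) × EuclideanSpace ℂ (Fin n) => Complex.I • p.2)
          (K ×ˢ sphere (0:EuclideanSpace ℂ (Fin n)) 1) :=
        (continuous_const_smul Complex.I).comp_continuousOn c2
      have hcont : ContinuousOn
          (fun p : EuclideanSpace ℂ (Fin n) × EuclideanSpace ℂ (Fin n) =>
            (1/4) * (fderiv ℝ (fderiv ℝ r) p.1 p.2 p.2
              + fderiv ℝ (fderiv ℝ r) p.1 (Complex.I • p.2) (Complex.I • p.2)))
          (K ×ˢ sphere (0:EuclideanSpace ℂ (Fin n)) 1) :=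
        continuousOn_const.mul (((c1.clm_apply c2).clm_apply c2).add
          ((c1.clm_apply c3).clm_apply c3))
      obtain ⟨p, hpS, hpmin⟩ := (hK.prod (isCompact_sphere 0 1)).exists_isMinOn hS hcont
      have hp1U : p.1 ∈ U := hKU hpS.1
      have hp2 : p.2 ≠ 0 := by
        have := mem_sphere_zero_iff_norm.1 hpS.2
        intro h0; rw [h0] at this; simp at this
      have hpos := hLevi p.1 hp1U p.2 hp2
      rw [hq_eq p.1 hp1U p.2] at hpos
      exact ⟨_, hpos, fun ζ hζ X hX =>
        hpmin (Set.mk_mem_prod hζ (mem_sphere_zero_iff_norm.2 hX))⟩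
    · exact ⟨1, one_pos, fun ζ hζ X hX =>
        absurd ⟨(ζ,X), Set.mk_mem_prod hζ (mem_sphere_zero_iff_norm.2 hX)⟩ hS⟩
  -- thickening and uniform continuity of the second derivative
  obtain ⟨δ, hδ, hδU⟩ := hK.exists_thickening_subset_open hU hKU
  have hK'cpt : IsCompact (cthickening (δ/2) K) := hK.cthickening
  have hK'U : cthickening (δ/2) K ⊆ U :=
    (cthickening_subset_thickening' hδ (half_lt_self hδ) K).trans hδU
  obtain ⟨δ', hδ', hδ'B⟩ := (Metric.uniformContinuousOn_iff
      (β := EuclideanSpace ℂ (Fin n) →L[ℝ] EuclideanSpace ℂ (Fin n) →L[ℝ] ℝ)).1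
    (by exact hK'cpt.uniformContinuousOn_of_continuous (by exact hBc.mono hK'U))
    (c₀/4) (by positivity)
  refine ⟨c₀/2, by positivity, min (δ/2) δ', lt_min (by positivity) hδ', ?_⟩
  intro ζ hζK hrζ z hzU hrz hlt
  have hζU := hKU hζK
  have hballK' : closedBall ζ ‖z - ζ‖ ⊆ cthickening (δ/2) K := by
    intro w hw
    refine thickening_subset_cthickening _ _ (mem_thickening_iff.2 ⟨ζ, hζK, ?_⟩)
    calc dist w ζ ≤ ‖z - ζ‖ := by simpa [mem_closedBall] using hw
      _ < δ/2 := lt_of_lt_of_le hlt (min_le_left _ _)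
  have hballU : closedBall ζ ‖z - ζ‖ ⊆ U := hballK'.trans hK'U
  have hBnear : ∀ w ∈ closedBall ζ ‖z - ζ‖,
      ‖fderiv ℝ (fderiv ℝ r) w - fderiv ℝ (fderiv ℝ r) ζ‖ ≤ c₀/4 := by
    intro w hw
    have hdist : dist w ζ < δ' :=
      lt_of_le_of_lt (by simpa [mem_closedBall] using hw)
        (lt_of_lt_of_le hlt (min_le_right _ _))
    have := hδ'B w (hballK' hw) ζ (self_subset_cthickening K hζK) hdist
    rw [dist_eq_norm (fderiv ℝ (fderiv ℝ r) w) (fderiv ℝ (fderiv ℝ r) ζ)] at this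
    exact this.le
  have htay := taylor_est r hballU hD hB (hsymm ζ hζU) hBnear
  -- quadratic lower bound
  have hquad : c₀ * ‖z - ζ‖^2 ≤ (1/4) * (fderiv ℝ (fderiv ℝ r) ζ (z - ζ) (z - ζ)
      + fderiv ℝ (fderiv ℝ r) ζ (Complex.I • (z - ζ)) (Complex.I • (z - ζ))) := by
    rcases eq_or_ne (z - ζ) 0 with h0 | h0
    · simp [h0]
    · have htn : 0 < ‖z - ζ‖ := norm_pos_iff.2 h0
      set X := (‖z - ζ‖)⁻¹ • (z - ζ) with hX
      have hXnorm : ‖X‖ = 1 := by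
        rw [hX, norm_smul, norm_inv, norm_norm, inv_mul_cancel₀ htn.ne']
      have hmin' := hmin ζ hζK X hXnorm
      have hzζ : z - ζ = ‖z - ζ‖ • X := by
        rw [hX, smul_smul, mul_inv_cancel₀ htn.ne', one_smul]
      rw [hzζ, smul_comm Complex.I (‖z - ζ‖) X]
      simp only [map_smul, ContinuousLinearMap.smul_apply, smul_eq_mul]
      have hnorm : ‖(‖z - ζ‖ : ℝ) • X‖ = ‖z - ζ‖ := by
        rw [norm_smul, hXnorm, norm_norm, mul_one]
      rw [hnorm]
      nlinarith [hmin', sq_nonneg ‖z - ζ‖]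
  -- conclusion
  rw [re_leviPolynomial_eq r hU hdiff hζU (hB ζ hζU) z]
  rw [hrζ] at htay
  have habs := (abs_le.1 htay).1
  linarith [habs, hquad, hrz, mul_nonneg hc₀.le (sq_nonneg ‖z - ζ‖)]
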